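/- For every prime p > 3, the harmonic sum 1 + 1/2 + ⋯ + 1/(p−1), viewed as a sum of inverses in ℤ/p², is congruent to 0 modulo p². -/
import Mathlib

open Finset

lemma unit_of_icc (p : ℕ) (hp : p.Prime) {k : ℕ} (hk : k ∈ Finset.Icc 1 (p - 1)) :
    IsUnit ((k : ZMod (p ^ 2))) := by
  have hp0 : 0 < p := hp.pos
  simp only [Finset.mem_Icc] at hk
  rw [ZMod.isUnit_iff_coprime]
  apply Nat.Coprime.pow_right
  rw [Nat.coprime_comm]
  exact (Nat.Prime.coprime_iff_not_dvd hp).mpr (fun h => by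
    have := Nat.le_of_dvd (by omega) h; omega)

lemma inv_sq_sum_zero (p : ℕ) (hp : p.Prime) (hp3 : 3 < p) :
    ∑ k ∈ Finset.Icc 1 (p - 1), ((k : ZMod p))⁻¹ ^ 2 = 0 := by
  haveI : Fact p.Prime := ⟨hp⟩
  have hp0 : 0 < p := hp.pos
  have h1 : ∑ k ∈ Finset.Icc 1 (p - 1), ((k : ZMod p))⁻¹ ^ 2
      = ∑ x ∈ (Finset.univ : Finset (ZMod p)).erase 0, x⁻¹ ^ 2 := by
    apply Finset.sum_nbij' (f := fun k : ℕ => ((k : ZMod p))⁻¹ ^ 2)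
      (g := fun x : ZMod p => x⁻¹ ^ 2) (i := fun k => ((k : ZMod p))) (j := fun x => x.val)
    · intro a ha
      simp only [Finset.mem_Icc] at ha
      simp only [Finset.mem_erase, Finset.mem_univ, and_true]
      intro h0
      rw [ZMod.natCast_eq_zero_iff] at h0
      have := Nat.le_of_dvd (by omega) h0; omega
    · intro x hx
      simp only [Finset.mem_erase, Finset.mem_univ, and_true] at hx
      simp only [Finset.mem_Icc]
      have h1 : x.val ≠ 0 := fun h => hx ((ZMod.val_eq_zero x).mp h)
      have h2 : x.val < p := ZMod.val_lt x
      omega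
    · intro a ha
      simp only [Finset.mem_Icc] at ha
      exact ZMod.val_cast_of_lt (by omega)
    · intro x hx; exact ZMod.natCast_zmod_val x
    · intro a ha; rfl
  rw [h1, Finset.sum_erase _ (by simp)]
  have h2 : ∑ x : ZMod p, x⁻¹ ^ 2 = ∑ x : ZMod p, x ^ 2 := by
    have hinv : Function.Involutive (fun x : ZMod p => x⁻¹) := fun x => inv_inv x
    exact Equiv.sum_comp hinv.toPerm (fun x => x ^ 2)
  rw [h2]
  have hcard : Fintype.card (ZMod p) = p := ZMod.card p
  have := FiniteField.sum_pow_lt_card_sub_one (K := ZMod p) 2 (by rw [hcard]; omega)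
  exact this

theorem stmt_14 (p : ℕ) (hp : p.Prime) (hp3 : 3 < p) :
    ∑ k ∈ Finset.Icc 1 (p - 1), ((k : ZMod (p ^ 2)))⁻¹ = 0 := by
  haveI : Fact p.Prime := ⟨hp⟩
  have hp0 : 0 < p := hp.pos
  set S := ∑ k ∈ Finset.Icc 1 (p - 1), ((k : ZMod (p ^ 2)))⁻¹ with hS
  -- reindex by k ↦ p - k
  have hrev : S = ∑ k ∈ Finset.Icc 1 (p - 1), (((p - k : ℕ) : ZMod (p ^ 2)))⁻¹ := by
    rw [hS]
    apply Finset.sum_nbij' (i := fun k => p - k) (j := fun k => p - k)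
    · intro a ha; simp only [Finset.mem_Icc] at ha ⊢; omega
    · intro a ha; simp only [Finset.mem_Icc] at ha ⊢; omega
    · intro a ha; simp only [Finset.mem_Icc] at ha; omega
    · intro a ha; simp only [Finset.mem_Icc] at ha; omega
    · intro a ha; simp only [Finset.mem_Icc] at ha
      congr 2; omega
  -- 2S = p * T
  have key : ∀ k ∈ Finset.Icc 1 (p - 1),
      ((k : ZMod (p ^ 2)))⁻¹ + (((p - k : ℕ) : ZMod (p ^ 2)))⁻¹
        = (p : ZMod (p ^ 2)) * (((k : ZMod (p ^ 2)))⁻¹ * (((p - k : ℕ) : ZMod (p ^ 2)))⁻¹) := by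
    intro k hk
    have hk' := hk
    simp only [Finset.mem_Icc] at hk'
    have hpk : (p - k) ∈ Finset.Icc 1 (p - 1) := by simp only [Finset.mem_Icc]; omega
    have ha := unit_of_icc p hp hk
    have hb := unit_of_icc p hp hpk
    have hsum : ((k : ZMod (p ^ 2))) + (((p - k : ℕ) : ZMod (p ^ 2))) = (p : ZMod (p ^ 2)) := by
      rw [← Nat.cast_add]; congr 1; omega
    rw [← hsum]
    set a := ((k : ZMod (p ^ 2))) with hadef
    set b := (((p - k : ℕ) : ZMod (p ^ 2))) with hbdef
    have h1 : a * a⁻¹ = 1 := ZMod.mul_inv_of_unit a ha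
    have h2 : b * b⁻¹ = 1 := ZMod.mul_inv_of_unit b hb
    calc a⁻¹ + b⁻¹ = (b * b⁻¹) * a⁻¹ + (a * a⁻¹) * b⁻¹ := by rw [h1, h2]; ring
    _ = (a + b) * (a⁻¹ * b⁻¹) := by ring
  have h2S : S + S = (p : ZMod (p ^ 2)) * ∑ k ∈ Finset.Icc 1 (p - 1),
      (((k : ZMod (p ^ 2)))⁻¹ * (((p - k : ℕ) : ZMod (p ^ 2)))⁻¹) := by
    nth_rewrite 2 [hrev]
    rw [hS, ← Finset.sum_add_distrib, Finset.mul_sum]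
    exact Finset.sum_congr rfl key
  set T := ∑ k ∈ Finset.Icc 1 (p - 1),
      (((k : ZMod (p ^ 2)))⁻¹ * (((p - k : ℕ) : ZMod (p ^ 2)))⁻¹) with hT
  -- p * T = 0 because T ≡ 0 mod p
  have hdvd : p ∣ p ^ 2 := dvd_pow_self p two_ne_zero
  set f : ZMod (p ^ 2) →+* ZMod p := ZMod.castHom hdvd (ZMod p) with hf
  have hfT : f T = 0 := by
    rw [hT, map_sum]
    have step : ∀ k ∈ Finset.Icc 1 (p - 1),
        f (((k : ZMod (p ^ 2)))⁻¹ * (((p - k : ℕ) : ZMod (p ^ 2)))⁻¹)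
          = -(((k : ZMod p))⁻¹ ^ 2) := by
      intro k hk
      have hk' := hk
      simp only [Finset.mem_Icc] at hk'
      have hpk : (p - k) ∈ Finset.Icc 1 (p - 1) := by simp only [Finset.mem_Icc]; omega
      have ha := unit_of_icc p hp hk
      have hb := unit_of_icc p hp hpk
      have finv : ∀ (a : ZMod (p ^ 2)), IsUnit a → f a⁻¹ = (f a)⁻¹ := by
        intro a ha
        have h1 : a * a⁻¹ = 1 := ZMod.mul_inv_of_unit a ha
        have := congrArg f h1
        rw [map_mul, map_one] at this
        exact inv_eq_of_mul_eq_one_right this |>.symm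
      rw [map_mul, finv _ ha, finv _ hb]
      have e1 : f ((k : ZMod (p ^ 2))) = (k : ZMod p) := by simp [hf]
      have e2 : f (((p - k : ℕ) : ZMod (p ^ 2))) = ((p - k : ℕ) : ZMod p) := by simp [hf]
      rw [e1, e2]
      have e3 : ((p - k : ℕ) : ZMod p) = -(k : ZMod p) := by
        have : ((p - k : ℕ) : ZMod p) + (k : ZMod p) = ((p : ℕ) : ZMod p) := by
          rw [← Nat.cast_add]; congr 1; omega
        rw [ZMod.natCast_self] at this
        linear_combination this
      rw [e3, inv_neg]
      ring
    rw [Finset.sum_congr rfl step, Finset.sum_neg_distrib, neg_eq_zero]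
    exact inv_sq_sum_zero p hp hp3
  have hpT : (p : ZMod (p ^ 2)) * T = 0 := by
    have hv : (p : ℕ) ∣ T.val := by
      have h := hfT
      rw [show f T = ((T.val : ℕ) : ZMod p) by
        rw [hf, ZMod.castHom_apply, ← ZMod.natCast_val]] at h
      exact (ZMod.natCast_eq_zero_iff _ _).mp h
    obtain ⟨c, hc⟩ := hv
    calc (p : ZMod (p ^ 2)) * T = (p : ZMod (p ^ 2)) * ((T.val : ℕ) : ZMod (p ^ 2)) := by
          rw [ZMod.natCast_val, ZMod.cast_id]
    _ = ((p * T.val : ℕ) : ZMod (p ^ 2)) := by push_cast; ring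
    _ = 0 := by
          rw [ZMod.natCast_eq_zero_iff, hc, ← mul_assoc, ← pow_two]
          exact Dvd.intro c rfl
  rw [hpT] at h2S
  have h2unit : IsUnit (2 : ZMod (p ^ 2)) := by
    rw [show ((2 : ZMod (p ^ 2))) = ((2 : ℕ) : ZMod (p ^ 2)) by push_cast; ring,
      ZMod.isUnit_iff_coprime]
    apply Nat.Coprime.pow_right
    rw [Nat.coprime_comm]
    exact (Nat.Prime.coprime_iff_not_dvd hp).mpr (fun h => by
      have := Nat.le_of_dvd (by omega) h; omega)
  have h2z : (2 : ZMod (p ^ 2)) * S = 0 := by rw [two_mul]; exact h2S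
  obtain ⟨u, hu⟩ := h2unit
  calc S = 1 * S := (one_mul S).symm
  _ = ((u⁻¹ : _) : ZMod (p ^ 2)) * (2 : ZMod (p ^ 2)) * S := by
        rw [← hu, Units.inv_mul]
  _ = ((u⁻¹ : _) : ZMod (p ^ 2)) * ((2 : ZMod (p ^ 2)) * S) := by ring
  _ = 0 := by rw [h2z, mul_zero]
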